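/- Let P : ℝ³ → ℝ be a polynomial function that is homogeneous of degree l (P(c·x) = c^l P(x) for all c ∈ ℝ, x ∈ ℝ³) and harmonic (Σ_{j=1}^{3} ∂ⱼ² P = 0 on ℝ³). Then the irregular solid harmonic x ↦ ‖x‖^{−2l−1} · P(x) is harmonic on ℝ³ \ {0}, i.e. Σ_{j=1}^{3} ∂ⱼ² (‖x‖^{−2l−1} P(x)) = 0 for all x ≠ 0. -/

import Mathlib

open Real Filter Finset
open scoped ContDiff


/-- The (flat, three-dimensional) Laplacian: sum of the three unmixed second partial
derivatives of a real-valued function on `ℝ³`. -/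
noncomputable def laplacian3 (u : (Fin 3 → ℝ) → ℝ) (x : Fin 3 → ℝ) : ℝ :=
  ∑ j : Fin 3, iteratedDeriv 2 (fun t : ℝ => u (Function.update x j t)) (x j)

/-- Euclidean norm on `ℝ³`. -/
noncomputable def enorm3 (x : Fin 3 → ℝ) : ℝ :=
  Real.sqrt (∑ j : Fin 3, x j ^ 2)

lemma contDiff_mvpoly (p : MvPolynomial (Fin 3) ℝ) :
    ContDiff ℝ ∞ (fun x : Fin 3 → ℝ => MvPolynomial.eval x p) := by
  induction p using MvPolynomial.induction_on with
  | C a => simpa using contDiff_const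
  | add p q hp hq => simpa using hp.add hq
  | mul_X p i hp => simpa using hp.mul (contDiff_pi.mp contDiff_id i)

lemma sum_sq_update (x : Fin 3 → ℝ) (j : Fin 3) (t : ℝ) :
    ∑ i : Fin 3, Function.update x j t i ^ 2
      = (∑ i ∈ Finset.univ.erase j, x i ^ 2) + t ^ 2 := by
  have h : (fun i => Function.update x j t i ^ 2)
      = Function.update (fun i => x i ^ 2) j (t ^ 2) := by
    funext i
    rcases eq_or_ne i j with rfl | hij
    · simp
    · simp [Function.update_of_ne hij]
  rw [h, Finset.sum_update_of_mem (Finset.mem_univ j), add_comm]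
  simp [Finset.sdiff_singleton_eq_erase]

/-- derivative of `t ↦ √(s+t²) ^ b` at points where `s + t² > 0` -/
lemma hasDerivAt_sqrt_zpow (b : ℤ) (s t : ℝ) (h : 0 < s + t ^ 2) :
    HasDerivAt (fun u : ℝ => Real.sqrt (s + u ^ 2) ^ b)
      ((b : ℝ) * t * Real.sqrt (s + t ^ 2) ^ (b - 2)) t := by
  have hsq : Real.sqrt (s + t ^ 2) ≠ 0 := by positivity
  have h1 : HasDerivAt (fun u : ℝ => s + u ^ 2) (2 * t) t := by
    simpa using ((hasDerivAt_pow 2 t).const_add s)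
  have h2 : HasDerivAt (fun u : ℝ => Real.sqrt (s + u ^ 2))
      (1 / (2 * Real.sqrt (s + t ^ 2)) * (2 * t)) t :=
    (Real.hasDerivAt_sqrt h.ne').comp t h1
  have h3 := (hasDerivAt_zpow b (Real.sqrt (s + t ^ 2)) (Or.inl hsq)).comp t h2
  refine h3.congr_deriv ?_
  have : Real.sqrt (s + t ^ 2) ^ (b - 2)
      = Real.sqrt (s + t ^ 2) ^ (b - 1) * (Real.sqrt (s + t ^ 2))⁻¹ := by
    rw [← zpow_sub_one₀ hsq]; ring_nf
  rw [this]
  field_simp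

lemma contDiff_update3 (x : Fin 3 → ℝ) (j : Fin 3) :
    ContDiff ℝ ∞ (fun t : ℝ => Function.update x j t) := by
  apply contDiff_pi.mpr
  intro i
  rcases eq_or_ne i j with rfl | hij
  · have : (fun t : ℝ => Function.update x i t i) = fun t => t := by
      funext t; simp
    rw [this]; exact contDiff_id
  · have : (fun t : ℝ => Function.update x j t i) = fun _ => x i := by
      funext t; simp [Function.update_of_ne hij]
    rw [this]; exact contDiff_const

/-- if `P : ℝ³ → ℝ` is a polynomial function, homogeneous of degree `l`
and harmonic, then the irregular solid harmonic `x ↦ ‖x‖^(−2l−1) P x` is harmonic on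
`ℝ³ \ {0}`. -/
theorem irregular_solid_harmonic (l : ℕ) (P : (Fin 3 → ℝ) → ℝ)
    (hpoly : ∃ p : MvPolynomial (Fin 3) ℝ, ∀ x, P x = MvPolynomial.eval x p)
    (hhom : ∀ (c : ℝ) (x : Fin 3 → ℝ), P (c • x) = c ^ l * P x)
    (hharm : ∀ x : Fin 3 → ℝ, laplacian3 P x = 0) :
    ∀ x : Fin 3 → ℝ, x ≠ 0 →
      laplacian3 (fun y => enorm3 y ^ (-(2 * (l : ℤ)) - 1) * P y) x = 0 := by
  obtain ⟨p, hp⟩ := hpoly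
  have hP : ContDiff ℝ ∞ P := by
    have h := contDiff_mvpoly p
    have : P = fun x => MvPolynomial.eval x p := funext hp
    rw [this]; exact h
  have h1top : (∞ : WithTop ℕ∞) ≠ 0 := by simp
  have hPdiff : Differentiable ℝ P := hP.differentiable h1top
  intro x hx
  set a : ℤ := -(2 * (l : ℤ)) - 1 with ha
  set r : ℝ := enorm3 x with hrdef
  -- positivity facts
  have hsum_pos : 0 < ∑ i : Fin 3, x i ^ 2 := by
    rcases Function.ne_iff.mp hx with ⟨i, hi⟩
    exact Finset.sum_pos' (fun _ _ => sq_nonneg _)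
      ⟨i, Finset.mem_univ i, (sq_nonneg (x i)).lt_of_ne (Ne.symm (pow_ne_zero 2 hi))⟩
  have hr_pos : 0 < r := Real.sqrt_pos.mpr hsum_pos
  have hr0 : r ≠ 0 := hr_pos.ne'
  have hr_sq : r ^ (2 : ℤ) = ∑ i : Fin 3, x i ^ 2 := by
    rw [hrdef]
    rw [show ((2:ℤ)) = ((2:ℕ):ℤ) by norm_num, zpow_natCast]
    exact Real.sq_sqrt hsum_pos.le
  -- partial derivatives
  set d : Fin 3 → ℝ := fun j => fderiv ℝ P x (Pi.single j 1) with hd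
  -- Euler identity
  have heuler : ∑ j : Fin 3, x j * d j = (l : ℝ) * P x := by
    have hsm : HasDerivAt (fun c : ℝ => c • x) x 1 := by
      simpa using (hasDerivAt_id (1:ℝ)).smul_const x
    have hF : HasDerivAt (fun c : ℝ => P (c • x)) (fderiv ℝ P x x) 1 := by
      have := (hPdiff ((1:ℝ) • x)).hasFDerivAt.comp_hasDerivAt 1 hsm
      rw [one_smul] at this; exact this
    have hG : HasDerivAt (fun c : ℝ => P (c • x)) ((l : ℝ) * P x) 1 := by
      have h1 : (fun c : ℝ => P (c • x)) = fun c : ℝ => c ^ l * P x :=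
        funext fun c => hhom c x
      rw [h1]
      simpa using (hasDerivAt_pow l (1:ℝ)).mul_const (P x)
    have huniq : fderiv ℝ P x x = (l : ℝ) * P x := hF.unique hG
    have hxsum : fderiv ℝ P x x = ∑ j : Fin 3, x j * d j := by
      have hxe : x = ∑ j : Fin 3, x j • (Pi.single j 1 : Fin 3 → ℝ) := by
        funext i
        simp [Finset.sum_apply, Pi.single_apply, Finset.sum_ite_eq',
          Finset.mem_univ, mul_comm]
      have h1 : fderiv ℝ P x x
          = fderiv ℝ P x (∑ j : Fin 3, x j • (Pi.single j 1 : Fin 3 → ℝ)) :=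
        congrArg (fun v => fderiv ℝ P x v) hxe
      rw [h1, map_sum]
      exact Finset.sum_congr rfl fun j _ => by
        rw [map_smul]; simp [hd, smul_eq_mul]
    rw [← hxsum, huniq]
  -- per-coordinate second derivative
  have hkey : ∀ j : Fin 3,
      iteratedDeriv 2 (fun t : ℝ =>
          enorm3 (Function.update x j t) ^ a * P (Function.update x j t)) (x j)
        = ((a : ℝ) * r ^ (a - 2) + (a : ℝ) * ((a : ℝ) - 2) * x j ^ 2 * r ^ (a - 4)) * P x
          + 2 * (a : ℝ) * x j * r ^ (a - 2) * d j
          + r ^ a * iteratedDeriv 2 (fun t : ℝ => P (Function.update x j t)) (x j) := by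
    intro j
    set s : ℝ := ∑ i ∈ Finset.univ.erase j, x i ^ 2 with hs
    have hsxj : s + x j ^ 2 = ∑ i : Fin 3, x i ^ 2 := by
      rw [hs]; exact Finset.sum_erase_add _ _ (Finset.mem_univ j)
    set q : ℝ → ℝ := fun t => P (Function.update x j t) with hq_def
    have hq : ContDiff ℝ ∞ q := hP.comp (contDiff_update3 x j)
    have hqd : Differentiable ℝ q := hq.differentiable h1top
    have hq'diff : Differentiable ℝ (deriv q) :=
      ((contDiff_infty_iff_deriv.mp hq).2).differentiable h1top
    have h_enorm : ∀ t : ℝ, enorm3 (Function.update x j t) = Real.sqrt (s + t ^ 2) := by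
      intro t; rw [enorm3, sum_sq_update]
    have hupd : Function.update x j (x j) = x := Function.update_eq_self j x
    have hsr : Real.sqrt (s + x j ^ 2) = r := by
      rw [hsxj, hrdef, enorm3]
    -- the open set
    have hU : IsOpen {t : ℝ | 0 < s + t ^ 2} :=
      isOpen_lt continuous_const (by continuity)
    have ht0 : (0:ℝ) < s + x j ^ 2 := by rw [hsxj]; exact hsum_pos
    have ht0' : x j ∈ {t : ℝ | 0 < s + t ^ 2} := ht0
    -- step A : first derivative on U
    set g : ℝ → ℝ := fun t =>
      enorm3 (Function.update x j t) ^ a * P (Function.update x j t) with hg_def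
    have hgfun : g = fun t => Real.sqrt (s + t ^ 2) ^ a * q t := by
      funext t; rw [hg_def]; simp only [h_enorm t]; rfl
    have stepA : ∀ t ∈ {t : ℝ | 0 < s + t ^ 2}, HasDerivAt g
        ((a : ℝ) * t * Real.sqrt (s + t ^ 2) ^ (a - 2) * q t
          + Real.sqrt (s + t ^ 2) ^ a * deriv q t) t := by
      intro t ht
      rw [hgfun]
      exact (hasDerivAt_sqrt_zpow a s t ht).mul (hqd t).hasDerivAt
    set F : ℝ → ℝ := fun t =>
      (a : ℝ) * t * Real.sqrt (s + t ^ 2) ^ (a - 2) * q t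
        + Real.sqrt (s + t ^ 2) ^ a * deriv q t with hF_def
    have hev : deriv g =ᶠ[nhds (x j)] F :=
      eventuallyEq_of_mem (hU.mem_nhds ht0') fun t ht => (stepA t ht).deriv
    -- step C : second derivative at x j
    have hid : HasDerivAt (fun t : ℝ => (a : ℝ) * t) (a : ℝ) (x j) := by
      simpa using (hasDerivAt_id (x j)).const_mul (a : ℝ)
    have h2 := hasDerivAt_sqrt_zpow (a - 2) s (x j) ht0
    have h3 : HasDerivAt q (deriv q (x j)) (x j) := (hqd (x j)).hasDerivAt
    have h4 : HasDerivAt (deriv q) (deriv (deriv q) (x j)) (x j) :=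
      (hq'diff (x j)).hasDerivAt
    have h5 := hasDerivAt_sqrt_zpow a s (x j) ht0
    have stepC : HasDerivAt F
        ((((a : ℝ) * Real.sqrt (s + x j ^ 2) ^ (a - 2)
            + (a : ℝ) * x j * (((a : ℝ) - 2) * x j * Real.sqrt (s + x j ^ 2) ^ (a - 2 - 2)))
              * q (x j)
          + (a : ℝ) * x j * Real.sqrt (s + x j ^ 2) ^ (a - 2) * deriv q (x j))
          + ((a : ℝ) * x j * Real.sqrt (s + x j ^ 2) ^ (a - 2) * deriv q (x j)
            + Real.sqrt (s + x j ^ 2) ^ a * deriv (deriv q) (x j))) (x j) := by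
      have := ((hid.mul h2).mul h3).add (h5.mul h4)
      refine this.congr_deriv ?_
      simp only [Pi.mul_apply]
      push_cast
      ring
    -- deriv q at x j equals d j
    have hderivq : deriv q (x j) = d j := by
      have hcomp : HasDerivAt q (fderiv ℝ P (Function.update x j (x j)) (Pi.single j 1))
          (x j) :=
        (hPdiff (Function.update x j (x j))).hasFDerivAt.comp_hasDerivAt (x j)
          (hasDerivAt_update x j (x j))
      rw [hcomp.deriv, hupd]
    -- second iterated deriv of q
    have hq2 : iteratedDeriv 2 q (x j) = deriv (deriv q) (x j) := by
      simp [iteratedDeriv_succ, iteratedDeriv_one]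
    -- put together
    have hg2 : iteratedDeriv 2 g (x j) = deriv (deriv g) (x j) := by
      simp [iteratedDeriv_succ, iteratedDeriv_one]
    have hgoal : iteratedDeriv 2 g (x j) = deriv F (x j) := by
      rw [hg2, hev.deriv_eq]
    have hqx : q (x j) = P x := by simp only [hq_def]; rw [hupd]
    rw [hgoal, stepC.deriv, hsr, hderivq, hqx, hq2,
      show a - 2 - 2 = a - 4 by ring]
    ring
  -- sum over coordinates
  have hlap : laplacian3 (fun y => enorm3 y ^ (-(2 * (l : ℤ)) - 1) * P y) x
      = ∑ j : Fin 3,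
        (((a : ℝ) * r ^ (a - 2) + (a : ℝ) * ((a : ℝ) - 2) * x j ^ 2 * r ^ (a - 4)) * P x
          + 2 * (a : ℝ) * x j * r ^ (a - 2) * d j
          + r ^ a * iteratedDeriv 2 (fun t : ℝ => P (Function.update x j t)) (x j)) := by
    rw [laplacian3]
    exact Finset.sum_congr rfl fun j _ => hkey j
  rw [hlap]
  have hsum_e : ∑ j : Fin 3,
      iteratedDeriv 2 (fun t : ℝ => P (Function.update x j t)) (x j) = 0 := hharm x
  rw [Finset.sum_add_distrib, Finset.sum_add_distrib]
  rw [← Finset.mul_sum, hsum_e, mul_zero, add_zero]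
  have hS2 : ∑ j : Fin 3, 2 * (a : ℝ) * x j * r ^ (a - 2) * d j
      = 2 * (a : ℝ) * r ^ (a - 2) * ((l : ℝ) * P x) := by
    rw [← heuler, Finset.mul_sum]
    exact Finset.sum_congr rfl fun j _ => by ring
  rw [hS2]
  have hS1 : ∑ j : Fin 3,
      ((a : ℝ) * r ^ (a - 2) + (a : ℝ) * ((a : ℝ) - 2) * x j ^ 2 * r ^ (a - 4)) * P x
      = 3 * (a : ℝ) * r ^ (a - 2) * P x
        + (a : ℝ) * ((a : ℝ) - 2) * r ^ (a - 4) * (r ^ (2:ℤ)) * P x := by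
    rw [hr_sq, Finset.mul_sum, Fin.sum_univ_three, Fin.sum_univ_three]
    ring
  rw [hS1]
  have hpow : r ^ (a - 4) * r ^ (2:ℤ) = r ^ (a - 2) := by
    rw [← zpow_add₀ hr0, show a - 4 + 2 = a - 2 by ring]
  have hcoef : 3 * (a : ℝ) + (a : ℝ) * ((a : ℝ) - 2) + 2 * (a : ℝ) * (l : ℝ) = 0 := by
    rw [ha]; push_cast; ring
  calc 3 * (a : ℝ) * r ^ (a - 2) * P x
        + (a : ℝ) * ((a : ℝ) - 2) * r ^ (a - 4) * r ^ (2:ℤ) * P x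
        + 2 * (a : ℝ) * r ^ (a - 2) * ((l : ℝ) * P x)
      = (3 * (a : ℝ) + (a : ℝ) * ((a : ℝ) - 2) + 2 * (a : ℝ) * (l : ℝ))
          * (r ^ (a - 2) * P x) := by
        rw [mul_assoc ((a:ℝ) * ((a:ℝ) - 2)) (r ^ (a-4)) (r ^ (2:ℤ)), hpow]; ring
    _ = 0 := by rw [hcoef, zero_mul]
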